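/- The vorticity of the preferred vector field is expressed through the contortion tensor by Ω_{ab} := h_a^c h_b^d ∇_{[d} v_{c]} = −K_{c[ab]} v^c − v_{[a} K_{b]cd} v^c v^d. -/
import Mathlib


open Finset

noncomputable section

/- Index set {0,1,2,3}. -/
abbrev Idx := Fin 4

/-- The Minkowski metric η_{ab} = diag(−1,1,1,1) (which equals its inverse η^{ab}). -/
def ηm (a b : Idx) : ℝ := if a = b then (if a = (0 : Idx) then -1 else 1) else 0

/-- Lowered components of a vector: v_a = η_{ab} v^b. -/
def lo (v : Idx → ℝ) (a : Idx) : ℝ := ∑ b, ηm a b * v b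

/-- Mixed projection tensor h_a^b = δ_a^b + v_a v^b. -/
def hmix (v : Idx → ℝ) (a b : Idx) : ℝ := (if a = b then 1 else 0) + lo v a * v b

/-- Fully lowered projection tensor h_{ab} = η_{ab} + v_a v_b. -/
def hlo (v : Idx → ℝ) (a b : Idx) : ℝ := ηm a b + lo v a * lo v b

/- Rank-3 tensors (all indices lowered). -/
abbrev T3 := Idx → Idx → Idx → ℝ

/-- The covariant derivative of the preferred vector field: ∇_a v_b := K_{bca} v^c. -/
def nab (K : T3) (v : Idx → ℝ) (a b : Idx) : ℝ := ∑ c, K b c a * v c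

/-- The acceleration v̇_a = K_{abc} v^b v^c. -/
def vdot (K : T3) (v : Idx → ℝ) (a : Idx) : ℝ := ∑ b, ∑ c, K a b c * v b * v c

/-- Contracting `hmix` against any function splits into a Kronecker part and a trace part. -/
lemma hmix_contract (v : Idx → ℝ) (x : Idx) (F : Idx → ℝ) :
    (∑ c, hmix v x c * F c) = F x + lo v x * ∑ c, v c * F c := by
  simp only [hmix, add_mul, Finset.sum_add_distrib, ite_mul, one_mul, zero_mul,
    Finset.sum_ite_eq, Finset.mem_univ, if_true, Finset.mul_sum, mul_assoc]

set_option maxHeartbeats 1000000 in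
/-- The vorticity of the preferred vector field,
`Ω_{ab} = h_a^c h_b^d ∇_{[d} v_{c]}`, is expressed through the contortion tensor as
`Ω_{ab} = −K_{c[ab]} v^c − v_{[a} K_{b]cd} v^c v^d`. -/
theorem statement8 (v : Idx → ℝ) (hv : (∑ a, lo v a * v a) = -1)
    (K : T3) (hK : ∀ a b c, K a b c = -K b a c) :
    ∀ a b : Idx,
      (∑ c, ∑ d, hmix v a c * hmix v b d * ((nab K v d c - nab K v c d) / 2))
        = -(∑ c, ((K c a b - K c b a) / 2) * v c)
          - (lo v a * vdot K v b - lo v b * vdot K v a) / 2 := by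
  intro a b
  have hK0 : K = fun a b c => (K a b c - K b a c) / 2 := by
    funext a b c; rw [hK a b c]; ring
  simp only [mul_assoc, ← Finset.mul_sum]
  rw [hmix_contract]
  simp only [hmix_contract]
  simp only [nab, vdot, Fin.sum_univ_four]
  rw [hK0]
  ring
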